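/- arXiv:math/0501147 — 2 statements merged into one kernel-verified Lean document; each statement's English description precedes it below -/
import Mathlib

section
/- The generating function C(z) = Σ_{n≥0} c_n z^n for the number c_n of (k,m)-ary trees of order n satisfies the functional equation C = (1 + z·C^m)^k. -/
open Polynomial

inductive PlaneTree : Type where
  | node : List PlaneTree → PlaneTree

namespace PlaneTree

/-- total number of vertices -/
def numVertices : PlaneTree → ℕ
  | node ts => 1 + (ts.attach.map (fun t => numVertices t.1)).sum
decreasing_by simp only [PlaneTree.node.sizeOf_spec]; exact Nat.lt_add_left 1 (List.sizeOf_lt_of_mem t.2)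

/-- number of internal vertices (vertices with at least one child) -/
def numInternal : PlaneTree → ℕ
  | node ts => (if ts.isEmpty then 0 else 1) + (ts.attach.map (fun t => numInternal t.1)).sum
decreasing_by simp only [PlaneTree.node.sizeOf_spec]; exact Nat.lt_add_left 1 (List.sizeOf_lt_of_mem t.2)

/-- product of `g h_v` over all internal vertices `v`, where `h_v` is the number of
internal vertices of the subtree rooted at `v` -/
def internalHookProd {α : Type} [CommMonoid α] (g : ℕ → α) : PlaneTree → α
  | node ts =>
    (if ts.isEmpty then 1 else g (numInternal (node ts))) *
      (ts.attach.map (fun t => internalHookProd g t.1)).prod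
decreasing_by simp only [PlaneTree.node.sizeOf_spec]; exact Nat.lt_add_left 1 (List.sizeOf_lt_of_mem t.2)

/-- product of `g h_v` over all vertices `v`, where `h_v` is the number of
vertices of the subtree rooted at `v` -/
def vertexHookProd {α : Type} [CommMonoid α] (g : ℕ → α) : PlaneTree → α
  | node ts =>
    g (numVertices (node ts)) * (ts.attach.map (fun t => vertexHookProd g t.1)).prod
decreasing_by simp only [PlaneTree.node.sizeOf_spec]; exact Nat.lt_add_left 1 (List.sizeOf_lt_of_mem t.2)

/-- every internal vertex has exactly `a` children -/
def IsFullAry (a : ℕ) : PlaneTree → Prop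
  | node ts => (ts.length = 0 ∨ ts.length = a) ∧ ∀ t ∈ ts, IsFullAry a t

/-- `IsKMAry k m b T`: with the root of `T` viewed as being on a level of parity `b`
(`b = false` meaning even), every vertex on an even level has `k` children and
every vertex on an odd level has `m` or `0` children. -/
def IsKMAry (k m : ℕ) : Bool → PlaneTree → Prop
  | b, node ts =>
    (if b then ts.length = m ∨ ts.length = 0 else ts.length = k) ∧
      ∀ t ∈ ts, IsKMAry k m (!b) t

/-- number of vertices on levels of parity `b`, the root having parity `cur` -/
def parityVertices (b cur : Bool) : PlaneTree → ℕ
  | node ts =>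
    (if cur = b then 1 else 0) + (ts.attach.map (fun t => parityVertices b (!cur) t.1)).sum
termination_by T => sizeOf T
decreasing_by simp only [PlaneTree.node.sizeOf_spec]; exact Nat.lt_add_left 1 (List.sizeOf_lt_of_mem t.2)

/-- number of internal vertices on levels of parity `b`, the root having parity `cur` -/
def parityInternal (b cur : Bool) : PlaneTree → ℕ
  | node ts =>
    (if cur = b ∧ ¬ts.isEmpty then 1 else 0) +
      (ts.attach.map (fun t => parityInternal b (!cur) t.1)).sum
termination_by T => sizeOf T
decreasing_by simp only [PlaneTree.node.sizeOf_spec]; exact Nat.lt_add_left 1 (List.sizeOf_lt_of_mem t.2)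

/-- the order of a `(k,m)`-ary tree: the number of internal (crucial) vertices on odd levels -/
def kmOrder (T : PlaneTree) : ℕ := parityInternal true false T

end PlaneTree

namespace PlaneTree

lemma parityInternal_node (b cur : Bool) (ts : List PlaneTree) :
    parityInternal b cur (node ts) =
      (if cur = b ∧ ¬ts.isEmpty then 1 else 0) + (ts.map (parityInternal b (!cur))).sum := by
  rw [parityInternal]
  congr 1
  rw [← List.attach_map_val (l := ts) (f := parityInternal b (!cur))]

lemma isKMAry_node (k m : ℕ) (b : Bool) (ts : List PlaneTree) :
    IsKMAry k m b (node ts) ↔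
      ((if b then ts.length = m ∨ ts.length = 0 else ts.length = k) ∧
        ∀ t ∈ ts, IsKMAry k m (!b) t) := by
  rw [IsKMAry]

end PlaneTree
section KMAux

open PlaneTree

variable {P : PlaneTree → Prop} {f : PlaneTree → ℕ}

/-- trees satisfying `P` with weight `n` -/
def KMTS (P : PlaneTree → Prop) (f : PlaneTree → ℕ) (n : ℕ) : Type :=
  {T : PlaneTree // P T ∧ f T = n}

/-- lists of `j` trees satisfying `P` with total weight `n` -/
def KMLS (P : PlaneTree → Prop) (f : PlaneTree → ℕ) (j n : ℕ) : Type :=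
  {l : List PlaneTree // l.length = j ∧ (∀ t ∈ l, P t) ∧ (l.map f).sum = n}

instance KMLS_zero_subsingleton (n : ℕ) : Subsingleton (KMLS P f 0 n) := by
  constructor
  rintro ⟨l, hl, -, -⟩ ⟨l', hl', -, -⟩
  apply Subtype.ext
  exact (List.length_eq_zero_iff.mp hl).trans (List.length_eq_zero_iff.mp hl').symm

instance (n : ℕ) : IsEmpty (KMLS P f 0 (n + 1)) := by
  constructor
  rintro ⟨l, hl, -, hs⟩
  rw [List.length_eq_zero_iff.mp hl] at hs
  simp at hs

instance : Unique (KMLS P f 0 0) where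
  default := ⟨[], rfl, by simp, rfl⟩
  uniq := fun a => Subsingleton.elim a _

/-- cons decomposition -/
def kmConsEquiv (j n : ℕ) :
    KMLS P f (j + 1) n ≃
      Σ p : (Finset.HasAntidiagonal.antidiagonal n : Finset (ℕ × ℕ)), KMTS P f p.1.1 × KMLS P f j p.1.2 where
  toFun := fun x => match x with
    | ⟨[], h, _, _⟩ => absurd h (by simp)
    | ⟨t :: l, h, hP, hs⟩ =>
      ⟨⟨(f t, (l.map f).sum), by
          simp only [Finset.HasAntidiagonal.mem_antidiagonal]
          simpa using hs⟩,
        ⟨t, hP t (by simp), rfl⟩,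
        ⟨l, by simpa using h, fun u hu => hP u (by simp [hu]), rfl⟩⟩
  invFun := fun ⟨⟨p, hp⟩, ⟨t, ht⟩, ⟨l, hl⟩⟩ =>
    ⟨t :: l, by simp [hl.1], by
      intro u hu
      rcases List.mem_cons.mp hu with rfl | hu'
      · exact ht.1
      · exact hl.2.1 u hu', by
      simp only [List.map_cons, List.sum_cons, ht.2, hl.2.2]
      simpa [Finset.HasAntidiagonal.mem_antidiagonal] using hp⟩
  left_inv := fun x => match x with
    | ⟨[], h, _, _⟩ => absurd h (by simp)
    | ⟨t :: l, h, hP, hs⟩ => rfl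
  right_inv := fun ⟨⟨p, hp⟩, ⟨t, ht⟩, ⟨l, hl⟩⟩ => by
    have h1 : f t = p.1 := ht.2
    have h2 : (l.map f).sum = p.2 := hl.2.2
    refine Sigma.ext ?_ ?_
    · apply Subtype.ext; simp [h1, h2]
    · cases p
      cases h1
      cases h2
      rfl

lemma kmLS_finite {n : ℕ} (h : ∀ i ≤ n, Finite (KMTS P f i)) :
    ∀ j, ∀ n' ≤ n, Finite (KMLS P f j n') := by
  intro j
  induction j with
  | zero => intro n' _; infer_instance
  | succ j ih =>
      intro n' hn'
      haveI : ∀ p : (Finset.HasAntidiagonal.antidiagonal n' : Finset (ℕ × ℕ)),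
          Finite (KMTS P f p.1.1 × KMLS P f j p.1.2) := by
        intro ⟨p, hp⟩
        have hp' := Finset.HasAntidiagonal.mem_antidiagonal.mp hp
        haveI := h p.1 (le_trans (by omega) hn')
        haveI := ih p.2 (le_trans (by omega) hn')
        infer_instance
      exact Finite.of_equiv _ (kmConsEquiv j n').symm

lemma Nat.card_sigma' {ι : Type*} [Fintype ι] (A : ι → Type*) [hA : ∀ i, Finite (A i)] :
    Nat.card (Σ i, A i) = ∑ i, Nat.card (A i) := by
  letI : ∀ i, Fintype (A i) := fun i => Fintype.ofFinite _
  simp [Nat.card_eq_fintype_card, Fintype.card_sigma]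

lemma kmLS_card_succ (hfin : ∀ i, Finite (KMTS P f i))
    (hfinL : ∀ j n, Finite (KMLS P f j n)) (j n : ℕ) :
    (Nat.card (KMLS P f (j + 1) n) : ℚ) =
      ∑ p ∈ Finset.HasAntidiagonal.antidiagonal n,
        (Nat.card (KMTS P f p.1) : ℚ) * (Nat.card (KMLS P f j p.2) : ℚ) := by
  rw [Nat.card_congr (kmConsEquiv j n)]
  haveI : ∀ p : (Finset.HasAntidiagonal.antidiagonal n : Finset (ℕ × ℕ)),
      Finite (KMTS P f p.1.1 × KMLS P f j p.1.2) := by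
    intro p
    haveI := hfin p.1.1
    haveI := hfinL j p.1.2
    infer_instance
  rw [Nat.card_sigma']
  push_cast
  rw [← Finset.sum_coe_sort (Finset.HasAntidiagonal.antidiagonal n)
    (fun p => (Nat.card (KMTS P f p.1) : ℚ) * (Nat.card (KMLS P f j p.2) : ℚ))]
  apply Finset.sum_congr rfl
  intro p _
  rw [Nat.card_prod]
  push_cast
  rfl

lemma kmLS_gf (hfin : ∀ i, Finite (KMTS P f i))
    (hfinL : ∀ j n, Finite (KMLS P f j n)) (j : ℕ) :
    PowerSeries.mk (fun n => (Nat.card (KMLS P f j n) : ℚ)) =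
      (PowerSeries.mk (fun n => (Nat.card (KMTS P f n) : ℚ))) ^ j := by
  induction j with
  | zero =>
      ext n
      rw [pow_zero, PowerSeries.coeff_mk, PowerSeries.coeff_one]
      cases n with
      | zero => simp [Nat.card_unique]
      | succ n => simp [Nat.card_of_isEmpty]
  | succ j ih =>
      ext n
      rw [pow_succ', ← ih, PowerSeries.coeff_mk, PowerSeries.coeff_mul,
        kmLS_card_succ hfin hfinL]
      simp [PowerSeries.coeff_mk]

end KMAux
section KMTrees

open PlaneTree

/-- weight of an odd-rooted tree -/
def kmDord (T : PlaneTree) : ℕ := parityInternal true true T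

lemma kmOrder_node (ts : List PlaneTree) :
    kmOrder (node ts) = (ts.map kmDord).sum := by
  rw [kmOrder, parityInternal_node]
  rw [if_neg (by simp), Nat.zero_add]
  rfl

lemma kmDord_node (ts : List PlaneTree) :
    kmDord (node ts) = (if ts.isEmpty then 0 else 1) + (ts.map kmOrder).sum := by
  rw [kmDord, parityInternal_node]
  have : (List.map (parityInternal true !true) ts) = List.map kmOrder ts := rfl
  rw [this]
  by_cases h : ts.isEmpty <;> simp [h]

lemma isKMAry_false_node (k m : ℕ) (ts : List PlaneTree) :
    IsKMAry k m false (node ts) ↔ ts.length = k ∧ ∀ t ∈ ts, IsKMAry k m true t := by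
  rw [isKMAry_node]; simp

lemma isKMAry_true_node (k m : ℕ) (ts : List PlaneTree) :
    IsKMAry k m true (node ts) ↔
      (ts.length = m ∨ ts.length = 0) ∧ ∀ t ∈ ts, IsKMAry k m false t := by
  rw [isKMAry_node]; simp

/-- an even-rooted tree is a list of `k` odd-rooted trees -/
def kmEvenEquiv (k m n : ℕ) :
    KMTS (IsKMAry k m false) kmOrder n ≃ KMLS (IsKMAry k m true) kmDord k n where
  toFun := fun x => match x with
    | ⟨node ts, h⟩ =>
      ⟨ts, ((isKMAry_false_node k m ts).mp h.1).1,
        ((isKMAry_false_node k m ts).mp h.1).2, by rw [← kmOrder_node]; exact h.2⟩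
  invFun := fun ⟨ts, h⟩ =>
    ⟨node ts, (isKMAry_false_node k m ts).mpr ⟨h.1, h.2.1⟩, by
      rw [kmOrder_node]; exact h.2.2⟩
  left_inv := fun x => match x with
    | ⟨node ts, h⟩ => rfl
  right_inv := fun ⟨ts, h⟩ => rfl

instance kmDoddZeroUnique (k m : ℕ) : Unique (KMTS (IsKMAry k m true) kmDord 0) where
  default := ⟨node [], (isKMAry_true_node k m []).mpr ⟨Or.inr rfl, by simp⟩, by
    rw [kmDord_node]; simp⟩
  uniq := by
    rintro ⟨⟨ts⟩, h1, h2⟩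
    apply Subtype.ext
    show node ts = node []
    rw [kmDord_node] at h2
    by_cases he : ts.isEmpty
    · rw [List.isEmpty_iff.mp he]
    · simp [he] at h2

/-- an odd-rooted tree of positive weight is a list of `m` even-rooted trees -/
def kmOddEquiv (k m : ℕ) (hm : 1 ≤ m) (n : ℕ) :
    KMTS (IsKMAry k m true) kmDord (n + 1) ≃ KMLS (IsKMAry k m false) kmOrder m n where
  toFun := fun x => match x with
    | ⟨node ts, h⟩ => by
      refine ⟨ts, ?_, ((isKMAry_true_node k m ts).mp h.1).2, ?_⟩
      · have h2 := h.2
        rw [kmDord_node] at h2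
        have hne : ¬ts.isEmpty := by
          intro he
          rw [List.isEmpty_iff.mp he] at h2
          simp at h2
        rcases ((isKMAry_true_node k m ts).mp h.1).1 with h' | h'
        · exact h'
        · exact absurd (List.isEmpty_iff_length_eq_zero.mpr h') hne
      · have h2 := h.2
        rw [kmDord_node] at h2
        have hne : ¬ts.isEmpty := by
          intro he
          rw [List.isEmpty_iff.mp he] at h2
          simp at h2
        rw [if_neg hne] at h2
        omega
  invFun := fun ⟨ts, h⟩ =>
    ⟨node ts, (isKMAry_true_node k m ts).mpr ⟨Or.inl h.1, h.2.1⟩, by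
      rw [kmDord_node]
      have hne : ¬ts.isEmpty := by
        rw [List.isEmpty_iff_length_eq_zero, h.1]
        omega
      rw [if_neg hne, h.2.2]
      omega⟩
  left_inv := fun x => match x with
    | ⟨node ts, h⟩ => rfl
  right_inv := fun ⟨ts, h⟩ => rfl

lemma kmCeven_finite (k m : ℕ) (hm : 1 ≤ m) :
    ∀ n, Finite (KMTS (IsKMAry k m false) kmOrder n) := by
  intro n
  induction n using Nat.strong_induction_on with
  | _ n ih =>
    have hD : ∀ j ≤ n, Finite (KMTS (IsKMAry k m true) kmDord j) := by
      intro j hj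
      match j with
      | 0 => infer_instance
      | i + 1 =>
        have hC : ∀ i' ≤ i, Finite (KMTS (IsKMAry k m false) kmOrder i') :=
          fun i' hi' => ih i' (by omega)
        haveI := kmLS_finite hC m i le_rfl
        exact Finite.of_equiv _ (kmOddEquiv k m hm i).symm
    haveI := kmLS_finite hD k n le_rfl
    exact Finite.of_equiv _ (kmEvenEquiv k m n).symm

lemma kmDodd_finite (k m : ℕ) (hm : 1 ≤ m) :
    ∀ n, Finite (KMTS (IsKMAry k m true) kmDord n) := by
  intro n
  match n with
  | 0 => infer_instance
  | i + 1 =>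
    haveI := kmLS_finite (fun i' (_ : i' ≤ i) => kmCeven_finite k m hm i') m i le_rfl
    exact Finite.of_equiv _ (kmOddEquiv k m hm i).symm

end KMTrees

/-- The generating function `C(z) = Σ cₙ zⁿ` for the numbers `cₙ` of `(k,m)`-ary trees of
order `n` satisfies `C = (1 + z·C^m)^k`. -/
theorem km_ary_gf_eq (k m : ℕ) (hk : 1 ≤ k) (hm : 1 ≤ m) :
    (PowerSeries.mk (fun n =>
        (Nat.card {T : PlaneTree // PlaneTree.IsKMAry k m false T ∧ PlaneTree.kmOrder T = n} : ℚ)))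
      = (1 + PowerSeries.X * (PowerSeries.mk (fun n =>
        (Nat.card {T : PlaneTree // PlaneTree.IsKMAry k m false T ∧ PlaneTree.kmOrder T = n} : ℚ))) ^ m) ^ k := by
  open PlaneTree in
  set C : PowerSeries ℚ :=
    PowerSeries.mk (fun n => (Nat.card (KMTS (IsKMAry k m false) kmOrder n) : ℚ)) with hC
  set D : PowerSeries ℚ :=
    PowerSeries.mk (fun n => (Nat.card (KMTS (IsKMAry k m true) kmDord n) : ℚ)) with hDdef
  have finC : ∀ n, Finite (KMTS (IsKMAry k m false) kmOrder n) := kmCeven_finite k m hm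
  have finD : ∀ n, Finite (KMTS (IsKMAry k m true) kmDord n) := kmDodd_finite k m hm
  have finLC : ∀ j n, Finite (KMLS (IsKMAry k m false) kmOrder j n) :=
    fun j n => kmLS_finite (fun i _ => finC i) j n le_rfl
  have finLD : ∀ j n, Finite (KMLS (IsKMAry k m true) kmDord j n) :=
    fun j n => kmLS_finite (fun i _ => finD i) j n le_rfl
  have hCD : C = D ^ k := by
    rw [hC, hDdef, ← kmLS_gf finD finLD k]
    ext n
    rw [PowerSeries.coeff_mk, PowerSeries.coeff_mk]
    rw [Nat.card_congr (kmEvenEquiv k m n)]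
  have hD : D = 1 + PowerSeries.X * C ^ m := by
    rw [hC, hDdef, ← kmLS_gf finC finLC m]
    ext n
    rw [PowerSeries.coeff_mk, map_add, PowerSeries.coeff_one]
    cases n with
    | zero =>
        rw [PowerSeries.coeff_zero_X_mul]
        haveI := kmDoddZeroUnique k m
        simp [Nat.card_unique]
    | succ n =>
        rw [PowerSeries.coeff_succ_X_mul, PowerSeries.coeff_mk]
        rw [Nat.card_congr (kmOddEquiv k m hm n)]
        simp
  calc C = D ^ k := hCD
    _ = (1 + PowerSeries.X * C ^ m) ^ k := by rw [hD]
end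

section
/- For m ≥ 1 and n ≥ 0, Σ_{T} Π_{v∈I(T)} (x + 1/h_v) = (1/((mn+1)·n!)) · Π_{i=0}^{n−1} ((mn+1+i)x + mn+1−mi), where the sum is over all complete (m+1)-ary trees T with n internal vertices. -/
open Polynomial

namespace PlaneTree

theorem myInd {P : PlaneTree → Prop}
    (h : ∀ ts : List PlaneTree, (∀ t ∈ ts, P t) → P (.node ts)) : ∀ T, P T
  | .node ts => h ts (fun t _ht => myInd h t)
decreasing_by simp only [PlaneTree.node.sizeOf_spec]; exact Nat.lt_add_left 1 (List.sizeOf_lt_of_mem _ht)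

theorem numInternal_node (ts : List PlaneTree) :
    numInternal (node ts) = (if ts.isEmpty then 0 else 1) + (ts.map numInternal).sum := by
  rw [numInternal]; congr 1; simp [List.attach_map_val]

theorem numVertices_node (ts : List PlaneTree) :
    numVertices (node ts) = 1 + (ts.map numVertices).sum := by
  rw [numVertices]; congr 1; simp [List.attach_map_val]

theorem internalHookProd_node {α : Type} [CommMonoid α] (g : ℕ → α) (ts : List PlaneTree) :
    internalHookProd g (node ts) =
      (if ts.isEmpty then 1 else g (numInternal (node ts))) *
        (ts.map (internalHookProd g)).prod := by
  rw [internalHookProd]; congr 1; simp [List.attach_map_val]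

theorem isFullAry_node {a : ℕ} {ts : List PlaneTree} :
    IsFullAry a (node ts) ↔ (ts.length = 0 ∨ ts.length = a) ∧ ∀ t ∈ ts, IsFullAry a t := by
  rw [IsFullAry]

theorem one_le_numVertices (T : PlaneTree) : 1 ≤ numVertices T := by
  induction T using myInd with
  | h ts _ => rw [numVertices_node]; omega

theorem numInternal_eq_zero_iff {ts : List PlaneTree} :
    numInternal (node ts) = 0 ↔ ts = [] := by
  constructor
  · intro h
    rw [numInternal_node] at h
    by_contra hne
    simp [List.isEmpty_iff, hne] at h
  · rintro rfl; simp [numInternal_node]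

theorem sum_map_affine (a : ℕ) (f : PlaneTree → ℕ) (ts : List PlaneTree) :
    (ts.map (fun t => a * f t + 1)).sum = a * (ts.map f).sum + ts.length := by
  induction ts with
  | nil => simp
  | cons t ts ihl =>
    simp only [List.map_cons, List.sum_cons, List.length_cons, ihl]
    ring

theorem numVertices_le_of_full {a : ℕ} {T : PlaneTree} (h : IsFullAry a T) :
    numVertices T ≤ a * numInternal T + 1 := by
  induction T using myInd with
  | h ts ih =>
    rw [isFullAry_node] at h
    rcases h with ⟨hlen, hall⟩
    rcases eq_or_ne ts [] with rfl | hne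
    · simp [numVertices_node]
    · have ha : ts.length = a := by
        rcases hlen with h0 | ha
        · exact absurd (List.length_eq_zero_iff.mp h0) hne
        · exact ha
      rw [numVertices_node, numInternal_node]
      have h1 : (ts.map numVertices).sum ≤ (ts.map (fun t => a * numInternal t + 1)).sum :=
        List.sum_le_sum fun t ht => ih t ht (hall t ht)
      have h2 := sum_map_affine a numInternal ts
      have hie : ts.isEmpty = false := by simpa [List.isEmpty_iff] using hne
      rw [hie]
      simp only [Bool.false_eq_true, if_false]
      rw [ha] at h2
      calc 1 + (ts.map numVertices).sum ≤ 1 + (a * (ts.map numInternal).sum + a) := by omega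
        _ = a * (1 + (ts.map numInternal).sum) + 1 := by ring


theorem length_le_sum_numVertices (ts : List PlaneTree) :
    ts.length ≤ (ts.map numVertices).sum := by
  induction ts with
  | nil => simp
  | cons t ts ihl =>
    simp only [List.map_cons, List.sum_cons, List.length_cons]
    have := one_le_numVertices t
    omega

theorem finite_lists_le {α : Type} {s : Set α} (hs : s.Finite) :
    ∀ j : ℕ, {l : List α | l.length ≤ j ∧ ∀ x ∈ l, x ∈ s}.Finite
  | 0 => by
    apply Set.Finite.subset (Set.finite_singleton ([] : List α))
    rintro l ⟨hlen, -⟩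
    simp [List.length_eq_zero_iff.mp (Nat.le_zero.mp hlen)]
  | (j+1) => by
    have hj := finite_lists_le hs j
    apply Set.Finite.subset (((hs.prod hj).image (fun p => p.1 :: p.2)).insert [])
    rintro l ⟨hlen, hmem⟩
    cases l with
    | nil => exact Set.mem_insert _ _
    | cons x l =>
      refine Set.mem_insert_of_mem _ ⟨(x, l), ⟨hmem x (by simp), ?_, ?_⟩, rfl⟩
      · simpa using Nat.le_of_succ_le_succ hlen
      · exact fun y hy => hmem y (List.mem_cons_of_mem x hy)

theorem finite_numVertices_le : ∀ N : ℕ, {T | numVertices T ≤ N}.Finite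
  | 0 => by
    apply Set.Finite.subset (Set.finite_empty)
    intro T hT
    have := one_le_numVertices T
    simp only [Set.mem_setOf_eq] at hT
    omega
  | (N+1) => by
    have hN := finite_numVertices_le N
    apply Set.Finite.subset ((finite_lists_le hN N).image node)
    rintro T hT
    cases T with
    | node ts =>
      simp only [Set.mem_setOf_eq, numVertices_node] at hT
      refine ⟨ts, ⟨?_, ?_⟩, rfl⟩
      · have := length_le_sum_numVertices ts
        omega
      · intro t ht
        have h1 : numVertices t ≤ (ts.map numVertices).sum :=
          List.le_sum_of_mem (List.mem_map_of_mem (f := numVertices) ht)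
        simp only [Set.mem_setOf_eq]
        omega

theorem finite_full_le (a n : ℕ) : {T | IsFullAry a T ∧ numInternal T ≤ n}.Finite := by
  apply Set.Finite.subset (finite_numVertices_le (a * n + 1))
  rintro T ⟨hf, hn⟩
  have := numVertices_le_of_full hf
  simp only [Set.mem_setOf_eq]
  have : a * numInternal T ≤ a * n := Nat.mul_le_mul_left a hn
  omega

theorem finite_full (a n : ℕ) : {T | IsFullAry a T ∧ numInternal T = n}.Finite := by
  apply Set.Finite.subset (finite_full_le a n)
  rintro T ⟨hf, hn⟩
  exact ⟨hf, hn.le⟩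

theorem finite_lset (a j l : ℕ) :
    {ts : List PlaneTree | ts.length = j ∧ (∀ t ∈ ts, IsFullAry a t) ∧
      (ts.map numInternal).sum = l}.Finite := by
  apply Set.Finite.subset (finite_lists_le (finite_full_le a l) j)
  rintro ts ⟨hlen, hfull, hsum⟩
  refine ⟨hlen.le, fun t ht => ⟨hfull t ht, ?_⟩⟩
  have : numInternal t ≤ (ts.map numInternal).sum :=
    List.le_sum_of_mem (List.mem_map_of_mem (f := numInternal) ht)
  omega


open scoped Classical in
noncomputable def treeFinset (a n : ℕ) : Finset PlaneTree := (finite_full a n).toFinset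

open scoped Classical in
noncomputable def listFinset (a j l : ℕ) : Finset (List PlaneTree) := (finite_lset a j l).toFinset

theorem mem_treeFinset {a n : ℕ} {T : PlaneTree} :
    T ∈ treeFinset a n ↔ IsFullAry a T ∧ numInternal T = n := by
  simp [treeFinset, Set.Finite.mem_toFinset]

theorem mem_listFinset {a j l : ℕ} {ts : List PlaneTree} :
    ts ∈ listFinset a j l ↔ ts.length = j ∧ (∀ t ∈ ts, IsFullAry a t) ∧
      (ts.map numInternal).sum = l := by
  simp [listFinset, Set.Finite.mem_toFinset]

noncomputable def hookF : PlaneTree → Polynomial ℚ :=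
  internalHookProd (fun h => Polynomial.X + Polynomial.C (1 / (h : ℚ)))

noncomputable def F (a n : ℕ) : Polynomial ℚ := ∑ T ∈ treeFinset a n, hookF T

noncomputable def LP (a j l : ℕ) : Polynomial ℚ :=
  ∑ ts ∈ listFinset a j l, (ts.map hookF).prod

theorem F_zero (a : ℕ) : F a 0 = 1 := by
  have : treeFinset a 0 = {node []} := by
    ext T
    rw [mem_treeFinset, Finset.mem_singleton]
    constructor
    · rintro ⟨hf, hn⟩
      cases T with
      | node ts => rw [numInternal_eq_zero_iff.mp hn]
    · rintro rfl
      exact ⟨by rw [isFullAry_node]; simp, numInternal_eq_zero_iff.mpr rfl⟩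
  rw [F, this, Finset.sum_singleton, hookF, internalHookProd_node]
  simp

theorem LP_zero (a l : ℕ) : LP a 0 l = if l = 0 then 1 else 0 := by
  have : listFinset a 0 l = if l = 0 then {([] : List PlaneTree)} else ∅ := by
    ext ts
    rw [mem_listFinset]
    split_ifs with hl
    · subst hl
      simp only [Finset.mem_singleton, List.length_eq_zero_iff]
      constructor
      · rintro ⟨rfl, -⟩; rfl
      · rintro rfl; simp
    · simp only [Finset.notMem_empty, iff_false]
      rintro ⟨hlen, -, hsum⟩
      rw [List.length_eq_zero_iff] at hlen
      subst hlen
      simp at hsum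
      exact hl hsum.symm
  rw [LP, this]
  split_ifs <;> simp

theorem F_succ (a n : ℕ) (ha : a ≠ 0) :
    F a (n+1) = (Polynomial.X + Polynomial.C (1 / ((n+1 : ℕ) : ℚ))) * LP a a n := by
  classical
  have himg : treeFinset a (n+1) = (listFinset a a n).image node := by
    ext T
    rw [mem_treeFinset, Finset.mem_image]
    constructor
    · rintro ⟨hf, hn⟩
      cases T with
      | node ts =>
        rw [isFullAry_node] at hf
        have hne : ts ≠ [] := fun h => by
          subst h; exact Nat.succ_ne_zero n (numInternal_eq_zero_iff.mpr rfl ▸ hn.symm ▸ rfl)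
        have hlen : ts.length = a := by
          rcases hf.1 with h0 | h
          · exact absurd (List.length_eq_zero_iff.mp h0) hne
          · exact h
        refine ⟨ts, mem_listFinset.mpr ⟨hlen, hf.2, ?_⟩, rfl⟩
        rw [numInternal_node] at hn
        have hie : ts.isEmpty = false := by simpa [List.isEmpty_iff] using hne
        rw [hie] at hn
        simp only [Bool.false_eq_true, if_false] at hn
        omega
    · rintro ⟨ts, hts, rfl⟩
      rw [mem_listFinset] at hts
      obtain ⟨hlen, hfull, hsum⟩ := hts
      have hne : ts ≠ [] := by
        intro h; subst h; simp at hlen; exact ha hlen.symm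
      have hie : ts.isEmpty = false := by simpa [List.isEmpty_iff] using hne
      constructor
      · rw [isFullAry_node]; exact ⟨Or.inr hlen, hfull⟩
      · rw [numInternal_node, hie]
        simp only [Bool.false_eq_true, if_false, hsum]
        omega
  rw [F, himg, Finset.sum_image (fun x _ y _ h => node.injEq x y ▸ h)]
  rw [LP, Finset.mul_sum]
  apply Finset.sum_congr rfl
  intro ts hts
  rw [mem_listFinset] at hts
  obtain ⟨hlen, hfull, hsum⟩ := hts
  have hne : ts ≠ [] := by
    intro h; subst h; simp at hlen; exact ha hlen.symm
  have hie : ts.isEmpty = false := by simpa [List.isEmpty_iff] using hne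
  have hni : numInternal (node ts) = n + 1 := by
    rw [numInternal_node, hie]
    simp only [Bool.false_eq_true, if_false, hsum]
    omega
  rw [hookF, internalHookProd_node, hie, hni]
  simp only [Bool.false_eq_true, if_false]


theorem LP_succ (a j l : ℕ) :
    LP a (j+1) l = ∑ k ∈ Finset.range (l+1), F a k * LP a j (l - k) := by
  classical
  have hset : listFinset a (j+1) l =
      (Finset.range (l+1)).biUnion (fun k =>
        ((treeFinset a k) ×ˢ (listFinset a j (l - k))).image (fun p => p.1 :: p.2)) := by
    ext ts
    simp only [Finset.mem_biUnion, Finset.mem_range, Finset.mem_image, Finset.mem_product]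
    rw [mem_listFinset]
    constructor
    · rintro ⟨hlen, hfull, hsum⟩
      cases ts with
      | nil => simp at hlen
      | cons t rest =>
        simp only [List.map_cons, List.sum_cons] at hsum
        refine ⟨numInternal t, by omega, (t, rest), ⟨?_, ?_⟩, rfl⟩
        · exact mem_treeFinset.mpr ⟨hfull t (by simp), rfl⟩
        · refine mem_listFinset.mpr ⟨by simpa using hlen, fun u hu => hfull u (by simp [hu]),
            by show (List.map numInternal rest).sum = l - numInternal t; omega⟩
    · rintro ⟨k, hk, ⟨t, rest⟩, ⟨ht, hrest⟩, rfl⟩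
      rw [mem_treeFinset] at ht
      rw [mem_listFinset] at hrest
      refine ⟨by simp [hrest.1], ?_, ?_⟩
      · rintro u hu
        rcases List.mem_cons.mp hu with rfl | hu
        · exact ht.1
        · exact hrest.2.1 u hu
      · simp only [List.map_cons, List.sum_cons, ht.2, hrest.2.2]
        omega
  have hdisj : ∀ k₁ ∈ Finset.range (l+1), ∀ k₂ ∈ Finset.range (l+1), k₁ ≠ k₂ →
      Disjoint (((treeFinset a k₁) ×ˢ (listFinset a j (l - k₁))).image (fun p => p.1 :: p.2))
        (((treeFinset a k₂) ×ˢ (listFinset a j (l - k₂))).image (fun p => p.1 :: p.2)) := by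
    intro k₁ _ k₂ _ hne
    rw [Finset.disjoint_left]
    rintro ts h1 h2
    simp only [Finset.mem_image, Finset.mem_product] at h1 h2
    obtain ⟨⟨t1, r1⟩, ⟨ht1, -⟩, rfl⟩ := h1
    obtain ⟨⟨t2, r2⟩, ⟨ht2, -⟩, heq⟩ := h2
    rw [mem_treeFinset] at ht1 ht2
    simp only [List.cons.injEq] at heq
    exact hne (ht1.2 ▸ heq.1 ▸ ht2.2 ▸ rfl)
  rw [LP, hset, Finset.sum_biUnion hdisj]
  apply Finset.sum_congr rfl
  intro k _
  rw [Finset.sum_image (by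
    rintro ⟨t1, r1⟩ - ⟨t2, r2⟩ - heq
    simpa using heq)]
  rw [F, LP, Finset.sum_mul_sum]
  rw [Finset.sum_product]
  apply Finset.sum_congr rfl
  intro t _
  apply Finset.sum_congr rfl
  intro rest _
  simp

end PlaneTree

namespace RaneyAux


noncomputable def av (t r : ℚ) : ℕ → ℚ
  | 0 => 1
  | (k+1) => r * (∏ i ∈ Finset.range k, (t * (k+1) + r - (i+1))) / (k+1).factorial

noncomputable def Ap (t : ℚ) : ℕ → Polynomial ℚ
  | 0 => 1
  | (k+1) => Polynomial.C ((((k+1).factorial : ℕ) : ℚ)⁻¹) *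
      (Polynomial.X * ∏ i ∈ Finset.range k, (Polynomial.X + Polynomial.C (t * (k+1) - (i+1))))

theorem av_eq_eval (t r : ℚ) (k : ℕ) : av t r k = (Ap t k).eval r := by
  cases k with
  | zero => simp [av, Ap]
  | succ k =>
    simp only [av, Ap, eval_mul, eval_C, eval_X, eval_prod, eval_add]
    push_cast
    rw [Finset.prod_congr rfl (fun (i : ℕ) (_ : i ∈ Finset.range k) =>
      (by ring : (t * ((k:ℚ)+1) + r - ((i:ℚ)+1)) = r + (t * ((k:ℚ)+1) - ((i:ℚ)+1))))]
    rw [div_eq_inv_mul]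

theorem av_zero_left (t : ℚ) (k : ℕ) : av t 0 k = if k = 0 then 1 else 0 := by
  cases k with
  | zero => simp [av]
  | succ k => simp [av]

theorem av_rec (t r : ℚ) (K : ℕ) :
    av t (r+1) (K+1+1) = av t r (K+1+1) + av t (r+t) (K+1) := by
  simp only [av]
  push_cast
  rw [Finset.prod_range_succ', Finset.prod_range_succ]
  push_cast
  rw [Finset.prod_congr rfl (fun (i : ℕ) (_ : i ∈ Finset.range K) =>
    (by push_cast; ring :
      (t * ((K:ℚ)+1+1) + (r+1) - ((i:ℚ)+1+1)) = t * ((K:ℚ)+1+1) + r - ((i:ℚ)+1)))]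
  rw [Finset.prod_congr rfl (fun (i : ℕ) (_ : i ∈ Finset.range K) =>
    (by push_cast; ring :
      (t * ((K:ℚ)+1) + (r+t) - ((i:ℚ)+1)) = t * ((K:ℚ)+1+1) + r - ((i:ℚ)+1)))]
  have hfac : ((K + 1 + 1).factorial : ℚ) = ((K:ℚ)+2) * ((K + 1).factorial : ℚ) := by
    rw [Nat.factorial_succ]; push_cast; ring
  have hfne : (((K+1).factorial : ℕ) : ℚ) ≠ 0 := by
    exact_mod_cast Nat.cast_ne_zero.mpr (Nat.factorial_ne_zero (K+1))
  rw [hfac]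
  have hK2 : ((K:ℚ)+2) ≠ 0 := by positivity
  field_simp
  ring

theorem av_rec' (t r : ℚ) (k : ℕ) (hk : k ≠ 0) :
    av t (r+1) k = av t r k + av t (r+t) (k-1) := by
  cases k with
  | zero => exact absurd rfl hk
  | succ K =>
    cases K with
    | zero => simp [av]
    | succ K => exact av_rec t r K

/-- Rothe–Hagen convolution -/
theorem RH (t : ℚ) : ∀ N : ℕ, ∀ s r : ℚ,
    (∑ k ∈ Finset.range (N+1), av t r k * av t s (N-k)) = av t (r+s) N := by
  intro N
  induction N using Nat.strong_induction_on with
  | _ N ih =>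
    intro s
    -- first for natural r
    have hnat : ∀ jr : ℕ, (∑ k ∈ Finset.range (N+1), av t (jr:ℚ) k * av t s (N-k))
        = av t ((jr:ℚ)+s) N := by
      intro jr
      induction jr with
      | zero =>
        rw [Finset.sum_eq_single 0]
        · simp [av]
        · intro k _ hk
          cases k with
          | zero => exact absurd rfl hk
          | succ k => simp [av_zero_left, Nat.cast_zero]
        · intro h; simp at h
      | succ jr ihr =>
        cases N with
        | zero => simp [av]
        | succ M =>
          push_cast
          have hsplit : ∀ k : ℕ, av t ((jr:ℚ)+1) k * av t s (M+1-k)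
              = av t (jr:ℚ) k * av t s (M+1-k)
                + (if k = 0 then 0 else av t ((jr:ℚ)+t) (k-1) * av t s (M+1-k)) := by
            intro k
            rcases Nat.eq_zero_or_pos k with rfl | hk
            · simp [av]
            · rw [av_rec' t (jr:ℚ) k (by omega), if_neg (by omega)]
              ring
          calc (∑ k ∈ Finset.range (M+1+1), av t ((jr:ℚ)+1) k * av t s (M+1-k))
              = (∑ k ∈ Finset.range (M+1+1), av t (jr:ℚ) k * av t s (M+1-k))
                + ∑ k ∈ Finset.range (M+1), av t ((jr:ℚ)+t) k * av t s (M-k) := by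
                rw [Finset.sum_congr rfl (fun (k : ℕ) (_ : k ∈ Finset.range (M+1+1)) =>
                  hsplit k)]
                rw [Finset.sum_add_distrib]
                congr 1
                rw [Finset.sum_range_succ' (fun k => if k = 0 then 0
                  else av t ((jr:ℚ)+t) (k-1) * av t s (M+1-k)) (M+1)]
                simp only [Nat.succ_ne_zero, if_false, Nat.succ_sub_one, eq_self_iff_true,
                  if_true, add_zero]
                apply Finset.sum_congr rfl
                intro k _
                have hmk : M + 1 - (k+1) = M - k := by omega
                rw [hmk]
            _ = av t ((jr:ℚ)+s) (M+1) + av t ((jr:ℚ)+t+s) M := by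
                rw [ihr, ih M (by omega) s ((jr:ℚ)+t)]
            _ = av t ((jr:ℚ)+1+s) (M+1) := by
                have := av_rec' t ((jr:ℚ)+s) (M+1) (Nat.succ_ne_zero M)
                simp only [Nat.succ_sub_one] at this
                rw [show ((jr:ℚ)+1+s) = ((jr:ℚ)+s)+1 by ring, this,
                  show ((jr:ℚ)+s+t) = ((jr:ℚ)+t+s) by ring]
    -- upgrade to all rational r via polynomials
    intro r
    have hpoly : (∑ k ∈ Finset.range (N+1), Ap t k * Polynomial.C (av t s (N-k)))
        = (Ap t N).comp (Polynomial.X + Polynomial.C s) := by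
      apply Polynomial.eq_of_infinite_eval_eq
      apply Set.infinite_of_injective_forall_mem (f := (Nat.cast : ℕ → ℚ))
        (hi := Nat.cast_injective)
      intro jr
      simp only [Set.mem_setOf_eq, eval_finset_sum, eval_mul, eval_C, eval_comp, eval_add,
        eval_X]
      calc (∑ k ∈ Finset.range (N+1), (Ap t k).eval (jr:ℚ) * av t s (N-k))
          = ∑ k ∈ Finset.range (N+1), av t (jr:ℚ) k * av t s (N-k) :=
            Finset.sum_congr rfl (fun k _ => by rw [← av_eq_eval])
        _ = av t ((jr:ℚ) + s) N := hnat jr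
        _ = (Ap t N).eval ((jr:ℚ) + s) := av_eq_eval t ((jr:ℚ)+s) N
    have := congrArg (Polynomial.eval r) hpoly
    simp only [eval_finset_sum, eval_mul, eval_C, eval_comp, eval_add, eval_X] at this
    calc (∑ k ∈ Finset.range (N+1), av t r k * av t s (N-k))
        = ∑ k ∈ Finset.range (N+1), (Ap t k).eval r * av t s (N-k) := by
          apply Finset.sum_congr rfl; intro k _; rw [av_eq_eval]
      _ = (Ap t N).eval (r + s) := this
      _ = av t (r+s) N := (av_eq_eval t (r+s) N).symm



noncomputable def mc (t c : ℚ) : ℕ → ℕ → ℚ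
  | 0, l => if l = 0 then 1 else 0
  | (j+1), l => ∑ k ∈ Finset.range (l+1), av t c k * mc t c j (l-k)

theorem mc_eq (t c : ℚ) : ∀ j l, mc t c j l = av t ((j:ℚ) * c) l := by
  intro j
  induction j with
  | zero =>
    intro l
    simp only [mc, Nat.cast_zero, zero_mul, av_zero_left]
  | succ j ihj =>
    intro l
    simp only [mc]
    rw [Finset.sum_congr rfl (fun (k : ℕ) (_ : k ∈ Finset.range (l+1)) => by rw [ihj (l-k)] :
      ∀ k ∈ Finset.range (l+1), av t c k * mc t c j (l-k) = av t c k * av t ((j:ℚ)*c) (l-k))]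
    rw [RH t l ((j:ℚ)*c) c]
    congr 1
    push_cast
    ring
end RaneyAux

namespace HookAux

open PlaneTree RaneyAux

theorem key_step (m : ℕ) (x : ℚ) (hmx : (m:ℚ) - x ≠ 0) (n : ℕ) :
    (x + 1/((n+1:ℕ):ℚ)) * av ((m:ℚ) * ((x+1)/((m:ℚ)-x))) (((m:ℚ)+1) * ((x+1)/((m:ℚ)-x))) n
      = ((m:ℚ) - x) * av ((m:ℚ) * ((x+1)/((m:ℚ)-x))) ((x+1)/((m:ℚ)-x)) (n+1) := by
  cases n with
  | zero =>
    simp only [av]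
    push_cast
    field_simp
    simp
  | succ K =>
    simp only [av]
    push_cast
    rw [Finset.prod_range_succ]
    rw [Finset.prod_congr rfl (fun (i : ℕ) (_ : i ∈ Finset.range K) =>
      (by field_simp; ring :
        ((m:ℚ) * ((x+1)/((m:ℚ)-x)) * ((K:ℚ)+1+1) + (x+1)/((m:ℚ)-x) - ((i:ℚ)+1))
          = (m:ℚ) * ((x+1)/((m:ℚ)-x)) * ((K:ℚ)+1) + ((m:ℚ)+1) * ((x+1)/((m:ℚ)-x)) - ((i:ℚ)+1)))]
    set M := ∏ i ∈ Finset.range K,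
      ((m:ℚ) * ((x+1)/((m:ℚ)-x)) * ((K:ℚ)+1) + ((m:ℚ)+1) * ((x+1)/((m:ℚ)-x)) - ((i:ℚ)+1)) with hM
    have hfac : ((K + 1 + 1).factorial : ℚ) = ((K:ℚ)+2) * ((K + 1).factorial : ℚ) := by
      rw [Nat.factorial_succ]; push_cast; ring
    have hfne : (((K+1).factorial : ℕ) : ℚ) ≠ 0 := by
      exact_mod_cast Nat.cast_ne_zero.mpr (Nat.factorial_ne_zero (K+1))
    have hK2 : ((K:ℚ)+2) ≠ 0 := by positivity
    rw [hfac]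
    field_simp
    ring


theorem eval_LP (m : ℕ) (x : ℚ) (j : ℕ) : ∀ l : ℕ,
    (∀ k ≤ l, (F (m+1) k).eval x
      = ((m:ℚ) - x)^k * av ((m:ℚ) * ((x+1)/((m:ℚ)-x))) ((x+1)/((m:ℚ)-x)) k) →
    (LP (m+1) j l).eval x
      = ((m:ℚ) - x)^l * mc ((m:ℚ) * ((x+1)/((m:ℚ)-x))) ((x+1)/((m:ℚ)-x)) j l := by
  induction j with
  | zero =>
    intro l _
    rw [LP_zero]
    simp only [mc]
    split_ifs with hl
    · subst hl; simp
    · simp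
  | succ j ihj =>
    intro l h
    rw [LP_succ]
    simp only [mc]
    rw [Polynomial.eval_finset_sum, Finset.mul_sum]
    apply Finset.sum_congr rfl
    intro k hk
    rw [Finset.mem_range] at hk
    rw [Polynomial.eval_mul, h k (by omega), ihj (l-k) (fun k' hk' => h k' (by omega))]
    have hp : ((m:ℚ)-x)^k * ((m:ℚ)-x)^(l-k) = ((m:ℚ)-x)^l := by
      rw [← pow_add]
      congr 1
      omega
    rw [mul_mul_mul_comm, hp]

theorem eval_F (m : ℕ) (x : ℚ) (hmx : (m:ℚ) - x ≠ 0) : ∀ n : ℕ,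
    (F (m+1) n).eval x
      = ((m:ℚ) - x)^n * av ((m:ℚ) * ((x+1)/((m:ℚ)-x))) ((x+1)/((m:ℚ)-x)) n := by
  intro n
  induction n using Nat.strong_induction_on with
  | _ n ihn =>
    cases n with
    | zero =>
      rw [F_zero]
      simp [av]
    | succ n =>
      rw [F_succ (m+1) n (Nat.succ_ne_zero m)]
      rw [Polynomial.eval_mul, Polynomial.eval_add, Polynomial.eval_X, Polynomial.eval_C]
      rw [eval_LP m x (m+1) n (fun k hk => ihn k (by omega))]
      rw [mc_eq]
      have hkey := key_step m x hmx n
      have hcast : (((m+1:ℕ)):ℚ) = (m:ℚ)+1 := by push_cast; ring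
      rw [hcast]
      rw [pow_succ]
      linear_combination (((m:ℚ)-x)^n) * hkey

theorem eval_RHS (m n : ℕ) (x : ℚ) (hmx : (m:ℚ) - x ≠ 0) :
    (Polynomial.C (1 / (((m * n + 1) * n.factorial : ℕ) : ℚ)) *
      ∏ i ∈ Finset.range n,
        (Polynomial.C ((m * n + 1 + i : ℕ) : ℚ) * Polynomial.X +
          Polynomial.C (((m * n + 1 : ℕ) : ℚ) - m * i))).eval x
    = ((m:ℚ) - x)^n * av ((m:ℚ) * ((x+1)/((m:ℚ)-x))) ((x+1)/((m:ℚ)-x)) n := by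
  cases n with
  | zero => simp [av]
  | succ K =>
    rw [Polynomial.eval_mul, Polynomial.eval_C, Polynomial.eval_prod]
    simp only [Polynomial.eval_add, Polynomial.eval_mul, Polynomial.eval_C, Polynomial.eval_X]
    rw [Finset.prod_range_succ']
    push_cast
    rw [Finset.prod_congr rfl (fun (i:ℕ) (_ : i ∈ Finset.range K) =>
      (by field_simp; ring :
        (((m:ℚ)*((K:ℚ)+1)+1+((i:ℚ)+1))*x + ((m:ℚ)*((K:ℚ)+1)+1 - (m:ℚ)*((i:ℚ)+1)) : ℚ)
          = ((m:ℚ)-x) * ((m:ℚ)*((x+1)/((m:ℚ)-x))*((K:ℚ)+1) + (x+1)/((m:ℚ)-x) - ((i:ℚ)+1))))]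
    rw [Finset.prod_mul_distrib, Finset.prod_const, Finset.card_range]
    simp only [av]
    push_cast
    have h1 : ((m:ℚ)*((K:ℚ)+1)+1) ≠ 0 := by positivity
    have hfne : (((K+1).factorial : ℕ) : ℚ) ≠ 0 := by
      exact_mod_cast Nat.cast_ne_zero.mpr (Nat.factorial_ne_zero (K+1))
    field_simp
    ring

end HookAux

/-- `Σ_T Π_{v∈I(T)} (x + 1/h_v) = (1/((mn+1)·n!)) · Π_{i=0}^{n-1} ((mn+1+i)x + mn+1-mi)`,
summed over all complete `(m+1)`-ary trees `T` with `n` internal vertices. -/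
theorem hook_poly_mary_shifted (m n : ℕ) (hm : 1 ≤ m) :
    (∑ᶠ T : {T : PlaneTree // PlaneTree.IsFullAry (m + 1) T ∧ PlaneTree.numInternal T = n},
        PlaneTree.internalHookProd
          (fun h => Polynomial.X + Polynomial.C (1 / (h : ℚ))) T.1)
      = Polynomial.C (1 / (((m * n + 1) * n.factorial : ℕ) : ℚ)) *
        ∏ i ∈ Finset.range n,
          (Polynomial.C ((m * n + 1 + i : ℕ) : ℚ) * Polynomial.X +
            Polynomial.C (((m * n + 1 : ℕ) : ℚ) - m * i)) := by
  classical
  have h1 : (∑ᶠ T : {T : PlaneTree // PlaneTree.IsFullAry (m + 1) T ∧ PlaneTree.numInternal T = n},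
      PlaneTree.internalHookProd (fun h => Polynomial.X + Polynomial.C (1 / (h : ℚ))) T.1)
      = PlaneTree.F (m+1) n := by
    rw [finsum_subtype_eq_finsum_cond]
    rw [PlaneTree.F]
    exact finsum_mem_eq_finite_toFinset_sum _ (PlaneTree.finite_full (m+1) n)
  rw [h1]
  apply Polynomial.eq_of_infinite_eval_eq
  apply Set.Infinite.mono (s := {(m:ℚ)}ᶜ)
  · intro x hx
    have hxm : x ≠ (m:ℚ) := by simpa [Set.mem_compl_iff] using hx
    have hmx : (m:ℚ) - x ≠ 0 := sub_ne_zero.mpr (Ne.symm hxm)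
    simp only [Set.mem_setOf_eq]
    rw [HookAux.eval_F m x hmx n, HookAux.eval_RHS m n x hmx]
  · exact (Set.finite_singleton ((m:ℚ))).infinite_compl
end
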